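/- arXiv:2508.20648 — 2 statements merged into one kernel-verified Lean document; each statement's English description precedes it below -/
import Mathlib

section
/- Let d be a positive even integer and s a positive integer with 2s ≤ d. Then the union ⋃_{ε ∈ I^s} C_ε is a (d-s)-neighborly code: for every two distinct strings u, v ∈ ⋃_{ε ∈ I^s} C_ε one has 1 ≤ dist(u,v) ≤ d - s. -/
/-- Strings of length `d` over the alphabet `S = {0,1,*}`; `none` is the joker `*`. -/
abbrev JString (d : ℕ) := Fin d → Option Bool

/-- The distance between two strings over `{0,1,*}`: the number of positions where both
entries are binary digits and they differ. -/
def jDist {d : ℕ} (u v : JString d) : ℕ :=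
  (Finset.univ.filter fun i => ∃ a b : Bool, u i = some a ∧ v i = some b ∧ a ≠ b).card

/-- `nkd k d` is `n(k,d)`: the maximum size of a family of strings in `S^d` any two
distinct members of which are at distance at least `1` and at most `k`. -/
noncomputable def nkd (k d : ℕ) : ℕ :=
  sSup {m | ∃ F : Finset (JString d),
    (∀ u ∈ F, ∀ v ∈ F, u ≠ v → 1 ≤ jDist u v ∧ jDist u v ≤ k) ∧ F.card = m}

/-- The weight `|x|` of a binary string. -/
def wt {n : ℕ} (x : Fin n → Bool) : ℕ := (Finset.univ.filter fun i => x i = true).card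

/-- The inner product `⟨x,y⟩` of two binary strings. -/
def ip {n : ℕ} (x y : Fin n → Bool) : ℕ :=
  (Finset.univ.filter fun i => x i = true ∧ y i = true).card

/-- The antipode `x̄` of a binary string. -/
def antipode {n : ℕ} (x : Fin n → Bool) : Fin n → Bool := fun i => !(x i)

/-- `t(ε)` (0-based): the largest index at which `ε` differs from its last entry; for
nonconstant `ε` this is the unique (0-based) index `i` with `ε i ≠ ε (i+1) = ⋯ = ε (s-1)`. -/
noncomputable def tIdx {s : ℕ} (ε : Fin s → Bool) : ℕ :=
  sSup {i : ℕ | ∃ h : i < s, ∃ h' : s - 1 < s, ε ⟨i, h⟩ ≠ ε ⟨s - 1, h'⟩}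

/-- The set `A_ε = {ε_1} × ⋯ × {ε_{t(ε)}} × I^{s-1-t(ε)} ⊆ I^{s-1}`. -/
def Aset {s : ℕ} (ε : Fin s → Bool) : Set (Fin (s - 1) → Bool) :=
  {x | ∀ j : Fin (s - 1), (j : ℕ) ≤ tIdx ε →
    x j = ε ⟨(j : ℕ), Nat.lt_of_lt_of_le j.isLt (Nat.sub_le s 1)⟩}

/-- The sets `X_k ⊆ I^{d-s}`: `X_0 = {|x| ≤ d/2 - s}`, `X_k = {|x| = d/2 - s + k}` for
`0 < k < s`, and `X_s = {|x| ≥ d/2}`. -/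
def Xk (d s k : ℕ) : Set (Fin (d - s) → Bool) :=
  if k = 0 then {x | wt x ≤ d / 2 - s}
  else if k = s then {x | d / 2 ≤ wt x}
  else {x | wt x = d / 2 - s + k}

/-- The last `m` coordinates of a binary string of length `n` (junk values if `m > n`). -/
def suffix (m : ℕ) {n : ℕ} (x : Fin n → Bool) : Fin m → Bool :=
  fun j => if h : n - m + (j : ℕ) < n then x ⟨n - m + (j : ℕ), h⟩ else false

/-- The set `B_ε ⊆ I^{d-s}`: `B_α = X_0`, `B_ω = X_s`, and for `ε ∉ {α,ω}`,
`B_ε = X_{|ε|} ∩ (I^{d-2s+1} × A_ε)`, identifying `I^{d-s}` with `I^{d-2s+1} × I^{s-1}`. -/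
def Bset (d : ℕ) {s : ℕ} (ε : Fin s → Bool) : Set (Fin (d - s) → Bool) :=
  if ε = (fun _ => false) then Xk d s 0
  else if ε = (fun _ => true) then Xk d s s
  else Xk d s (wt ε) ∩ {x | suffix (s - 1) x ∈ Aset ε}

/-- Concatenation of a binary string of length `d - s` with a string over `{0,1,*}` of
length `s`, producing a string over `{0,1,*}` of length `d`. -/
def glue {d s : ℕ} (x : Fin (d - s) → Bool) (w : Fin s → Option Bool) : JString d :=
  fun i => if h : (i : ℕ) < d - s then some (x ⟨(i : ℕ), h⟩)
    else if h' : (i : ℕ) - (d - s) < s then w ⟨(i : ℕ) - (d - s), h'⟩ else none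

/-- The set `*^ε = *^{ε_1} × ⋯ × *^{ε_s} ⊆ S^s`, where `*^0 = {*}` and `*^1 = {0,1}`. -/
def starSet {s : ℕ} (ε : Fin s → Bool) : Set (Fin s → Option Bool) :=
  {w | ∀ j, if ε j = true then ∃ b : Bool, w j = some b else w j = none}

/-- The set `C_ε = B_ε × *^ε ⊆ S^d`. -/
def Cset (d : ℕ) {s : ℕ} (ε : Fin s → Bool) : Set (JString d) :=
  {u | ∃ x ∈ Bset d ε, ∃ w ∈ starSet ε, u = glue x w}

lemma cellB {n : ℕ} (x y : Fin n → Bool) :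
    ip x y + n = wt x + wt y + (Finset.univ.filter fun i => x i = false ∧ y i = false).card := by
  unfold ip wt
  simp only [Finset.card_filter]
  have key : (∑ i : Fin n, (((if x i = true ∧ y i = true then 1 else 0) : ℕ) + 1))
      = ∑ i : Fin n, (((if x i = true then 1 else 0) + if y i = true then 1 else 0)
          + if x i = false ∧ y i = false then 1 else 0) := by
    apply Finset.sum_congr rfl
    intro i _
    cases hx : x i <;> cases hy : y i <;> simp [hx, hy]
  rw [Finset.sum_add_distrib, Finset.sum_add_distrib, Finset.sum_add_distrib] at key
  simpa using key

lemma cellA {n : ℕ} (x y : Fin n → Bool) :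
    (Finset.univ.filter fun i => x i = y i).card
      = ip x y + (Finset.univ.filter fun i => x i = false ∧ y i = false).card := by
  unfold ip
  simp only [Finset.card_filter]
  rw [← Finset.sum_add_distrib]
  apply Finset.sum_congr rfl
  intro i _
  cases hx : x i <;> cases hy : y i <;> simp [hx, hy]

lemma wt_eq_zero {s : ℕ} {ε : Fin s → Bool} (h : wt ε = 0) : ε = fun _ => false := by
  funext j
  have he : (Finset.univ.filter fun i => ε i = true) = ∅ := Finset.card_eq_zero.mp h
  by_contra hj
  have hm : j ∈ (Finset.univ.filter fun i => ε i = true) := by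
    simp only [Bool.not_eq_false] at hj
    simp [hj]
  rw [he] at hm
  exact absurd hm (Finset.notMem_empty _)

lemma wt_eq_full {s : ℕ} {ε : Fin s → Bool} (h : wt ε = s) : ε = fun _ => true := by
  funext j
  have he : (Finset.univ.filter fun i => ε i = true) = Finset.univ := by
    apply Finset.eq_of_subset_of_card_le (Finset.filter_subset _ _)
    rw [show (Finset.filter (fun i => ε i = true) Finset.univ).card = wt ε from rfl, h]
    simp
  have hm : j ∈ Finset.univ.filter fun i => ε i = true := by rw [he]; exact Finset.mem_univ j
  exact (Finset.mem_filter.mp hm).2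

lemma wt_le {s : ℕ} (ε : Fin s → Bool) : wt ε ≤ s := by
  unfold wt
  simpa using Finset.card_filter_le Finset.univ (fun i => ε i = true)

lemma exists_ne_last {s : ℕ} (hs : 0 < s) {ε : Fin s → Bool}
    (hα : ε ≠ fun _ => false) (hω : ε ≠ fun _ => true) :
    ∃ j : Fin s, ε j ≠ ε ⟨s - 1, Nat.sub_lt hs one_pos⟩ := by
  by_contra h
  push_neg at h
  cases hlast : ε ⟨s - 1, Nat.sub_lt hs one_pos⟩
  · exact hα (funext fun j => by rw [h j, hlast])
  · exact hω (funext fun j => by rw [h j, hlast])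

lemma tIdx_spec {s : ℕ} (hs : 0 < s) {ε : Fin s → Bool}
    (hα : ε ≠ fun _ => false) (hω : ε ≠ fun _ => true) :
    tIdx ε < s - 1 ∧
    (∀ h : tIdx ε < s, ε ⟨tIdx ε, h⟩ ≠ ε ⟨s - 1, Nat.sub_lt hs one_pos⟩) ∧
    (∀ j : Fin s, tIdx ε < (j : ℕ) → ε j = ε ⟨s - 1, Nat.sub_lt hs one_pos⟩) := by
  obtain ⟨j0, hj0⟩ := exists_ne_last hs hα hω
  set T := {i : ℕ | ∃ h : i < s, ∃ h' : s - 1 < s, ε ⟨i, h⟩ ≠ ε ⟨s - 1, h'⟩} with hT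
  have hne : T.Nonempty := ⟨j0, j0.isLt, Nat.sub_lt hs one_pos, hj0⟩
  have hbdd : BddAbove T := ⟨s, fun i hi => le_of_lt hi.1⟩
  have hmem : tIdx ε ∈ T := Nat.sSup_mem hne hbdd
  obtain ⟨ht, h', hne'⟩ := hmem
  have hmax : ∀ i ∈ T, i ≤ tIdx ε := fun i hi => le_csSup hbdd hi
  have htne : tIdx ε ≠ s - 1 := by
    intro he
    apply hne'
    have : (⟨tIdx ε, ht⟩ : Fin s) = ⟨s - 1, h'⟩ := by
      apply Fin.ext; exact he
    rw [this]
  refine ⟨lt_of_le_of_ne (Nat.le_sub_one_of_lt ht) htne, ?_, ?_⟩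
  · intro h; exact hne'
  · intro j hj
    by_contra hc
    exact absurd (hmax j ⟨j.isLt, Nat.sub_lt hs one_pos, hc⟩) (not_le.mpr hj)

lemma Bset_mid {d s : ℕ} {ε : Fin s → Bool} {x : Fin (d-s) → Bool}
    (hα : ε ≠ fun _ => false) (hω : ε ≠ fun _ => true) (hx : x ∈ Bset d ε) :
    wt x = d / 2 - s + wt ε ∧ suffix (s-1) x ∈ Aset ε := by
  simp only [Bset, if_neg hα, if_neg hω] at hx
  obtain ⟨hx1, hx2⟩ := hx
  have h0 : wt ε ≠ 0 := fun h => hα (wt_eq_zero h)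
  have hsfull : wt ε ≠ s := fun h => hω (wt_eq_full h)
  simp only [Xk, if_neg h0, if_neg hsfull] at hx1
  exact ⟨hx1, hx2⟩

lemma forced {d s : ℕ} (hs : 0 < s) {ε : Fin s → Bool} {x : Fin (d-s) → Bool}
    (hα : ε ≠ fun _ => false) (hω : ε ≠ fun _ => true) (hx : x ∈ Bset d ε)
    (jn : ℕ) (hj : jn ≤ tIdx ε) (hj1 : jn < s - 1)
    (h1 : (d-s) - (s-1) + jn < d - s) (h2 : jn < s) :
    x ⟨(d-s)-(s-1)+jn, h1⟩ = ε ⟨jn, h2⟩ := by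
  have hsuf := (Bset_mid hα hω hx).2
  have := hsuf ⟨jn, hj1⟩ hj
  simp only [suffix] at this
  rw [dif_pos h1] at this
  exact this

lemma wt_x_lower {d s : ℕ} (hs : 0 < s) (hsd : 2*s ≤ d) {ε : Fin s → Bool} {x : Fin (d-s) → Bool}
    (hα : ε ≠ fun _ => false) (hx : x ∈ Bset d ε) :
    d / 2 - s + wt ε ≤ wt x := by
  by_cases hω : ε = fun _ => true
  · have hwts : wt ε = s := by
      subst hω; unfold wt; simp
    simp only [Bset, if_neg hα, if_pos hω] at hx
    simp only [Xk, if_neg (by omega : s ≠ 0), eq_self_iff_true, if_true, Set.mem_setOf_eq] at hx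
    have h2 : s ≤ d / 2 := by omega
    rw [hwts]
    omega
  · exact le_of_eq (Bset_mid hα hω hx).1.symm

lemma main_mid {d s : ℕ} (hde : Even d) (hs : 0 < s) (hsd : 2*s ≤ d)
    {ε δ : Fin s → Bool} {x y : Fin (d-s) → Bool}
    (hεα : ε ≠ fun _ => false) (hεω : ε ≠ fun _ => true)
    (hδα : δ ≠ fun _ => false) (hδω : δ ≠ fun _ => true)
    (hx : x ∈ Bset d ε) (hy : y ∈ Bset d δ)
    (hT : tIdx ε ≤ tIdx δ) :
    ip ε δ ≤ (Finset.univ.filter fun i : Fin (d-s) => x i = y i).card := by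
  obtain ⟨ht1, ht1v, ht1max⟩ := tIdx_spec hs hεα hεω
  obtain ⟨ht2, ht2v, ht2max⟩ := tIdx_spec hs hδα hδω
  have hs1n : s - 1 ≤ d - s := by omega
  have hn0 : 0 < d - s := by omega
  -- the embedding of suffix-block indices into Fin (d-s)
  set f : Fin s → Fin (d-s) := fun j =>
    if h : (j : ℕ) < s - 1 then ⟨(d-s) - (s-1) + (j:ℕ), by omega⟩ else ⟨0, hn0⟩ with hf
  have hinj : ∀ j j' : Fin s, (j:ℕ) < s - 1 → (j':ℕ) < s - 1 → f j = f j' → j = j' := by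
    intro j j' h h' he
    simp only [hf, dif_pos h, dif_pos h'] at he
    have := Fin.mk.injEq _ _ _ _ ▸ he
    apply Fin.ext
    have : (d-s) - (s-1) + (j:ℕ) = (d-s) - (s-1) + (j':ℕ) := congrArg Fin.val he
    omega
  cases ha : ε ⟨s - 1, Nat.sub_lt hs one_pos⟩
  · -- tail false: inject common-ones into agreement set
    apply le_trans _ (le_refl _)
    unfold ip
    apply Finset.card_le_card_of_injOn f
    · intro j hj
      simp only [Finset.mem_coe, Finset.mem_filter, Finset.mem_univ, true_and] at hj ⊢
      obtain ⟨hje, hjd⟩ := hj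
      have hjt1 : (j:ℕ) ≤ tIdx ε := by
        by_contra hc
        have hh := ht1max j (by omega)
        rw [ha] at hh
        exact absurd hh (by simp [hje])
      have hjs1 : (j:ℕ) < s - 1 := by omega
      have hfx : x (f j) = ε ⟨(j:ℕ), j.isLt⟩ := by
        simp only [hf, dif_pos hjs1]
        exact forced hs hεα hεω hx (j:ℕ) hjt1 hjs1 (by omega) j.isLt
      have hfy : y (f j) = δ ⟨(j:ℕ), j.isLt⟩ := by
        simp only [hf, dif_pos hjs1]
        exact forced hs hδα hδω hy (j:ℕ) (le_trans hjt1 hT) hjs1 (by omega) j.isLt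
      rw [hfx, hfy]
      have : ε ⟨(j:ℕ), j.isLt⟩ = ε j := by congr 1
      rw [this, hje]
      have : δ ⟨(j:ℕ), j.isLt⟩ = δ j := by congr 1
      rw [this, hjd]
    · intro j hj j' hj' he
      simp only [Finset.coe_filter, Set.mem_setOf_eq] at hj hj'
      have hjt1 : (j:ℕ) ≤ tIdx ε := by
        by_contra hc
        have := ht1max j (by omega)
        rw [ha] at this
        exact absurd this (by simp [hj.2.1])
      have hjt1' : (j':ℕ) ≤ tIdx ε := by
        by_contra hc
        have := ht1max j' (by omega)
        rw [ha] at this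
        exact absurd this (by simp [hj'.2.1])
      exact hinj j j' (by omega) (by omega) he
  · -- tail true: inject common-zeros, then count
    have hc00 : (Finset.univ.filter fun j : Fin s => ε j = false ∧ δ j = false).card
        ≤ (Finset.univ.filter fun i : Fin (d-s) => x i = false ∧ y i = false).card := by
      apply Finset.card_le_card_of_injOn f
      · intro j hj
        simp only [Finset.mem_coe, Finset.mem_filter, Finset.mem_univ, true_and] at hj ⊢
        obtain ⟨hje, hjd⟩ := hj
        have hjt1 : (j:ℕ) ≤ tIdx ε := by
          by_contra hc
          have := ht1max j (by omega)
          rw [ha] at this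
          exact absurd this (by simp [hje])
        have hjs1 : (j:ℕ) < s - 1 := by omega
        have hfx : x (f j) = ε ⟨(j:ℕ), j.isLt⟩ := by
          simp only [hf, dif_pos hjs1]
          exact forced hs hεα hεω hx (j:ℕ) hjt1 hjs1 (by omega) j.isLt
        have hfy : y (f j) = δ ⟨(j:ℕ), j.isLt⟩ := by
          simp only [hf, dif_pos hjs1]
          exact forced hs hδα hδω hy (j:ℕ) (le_trans hjt1 hT) hjs1 (by omega) j.isLt
        constructor
        · rw [hfx]; have : ε ⟨(j:ℕ), j.isLt⟩ = ε j := by congr 1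
          rw [this, hje]
        · rw [hfy]; have : δ ⟨(j:ℕ), j.isLt⟩ = δ j := by congr 1
          rw [this, hjd]
      · intro j hj j' hj' he
        simp only [Finset.coe_filter, Set.mem_setOf_eq] at hj hj'
        have hjt1 : (j:ℕ) ≤ tIdx ε := by
          by_contra hc
          have := ht1max j (by omega)
          rw [ha] at this
          exact absurd this (by simp [hj.2.1])
        have hjt1' : (j':ℕ) ≤ tIdx ε := by
          by_contra hc
          have := ht1max j' (by omega)
          rw [ha] at this
          exact absurd this (by simp [hj'.2.1])
        exact hinj j j' (by omega) (by omega) he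
    have hwx : wt x = d / 2 - s + wt ε := (Bset_mid hεα hεω hx).1
    have hwy : wt y = d / 2 - s + wt δ := (Bset_mid hδα hδω hy).1
    have hBe := cellB ε δ
    have hA := cellA x y
    have hB := cellB x y
    have hcard : (Fintype.card (Fin s)) = s := Fintype.card_fin s
    have hmod : d % 2 = 0 := Nat.even_iff.mp hde
    have hwle : wt ε ≤ s := wt_le ε
    have hwle' : wt δ ≤ s := wt_le δ
    omega

lemma main_agree {d s : ℕ} (hde : Even d) (hs : 0 < s) (hsd : 2*s ≤ d)
    {ε δ : Fin s → Bool} {x y : Fin (d-s) → Bool}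
    (hx : x ∈ Bset d ε) (hy : y ∈ Bset d δ) :
    ip ε δ ≤ (Finset.univ.filter fun i : Fin (d-s) => x i = y i).card := by
  by_cases hεα : ε = fun _ => false
  · have : ip ε δ = 0 := by
      unfold ip
      rw [Finset.card_eq_zero, Finset.filter_eq_empty_iff]
      intro j _
      subst hεα; simp
    omega
  by_cases hδα : δ = fun _ => false
  · have : ip ε δ = 0 := by
      unfold ip
      rw [Finset.card_eq_zero, Finset.filter_eq_empty_iff]
      intro j _
      subst hδα; simp
    omega
  by_cases hc0 : (Finset.univ.filter fun j : Fin s => ε j = false ∧ δ j = false).card = 0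
  · -- no common zero: weight-count argument suffices
    have hwx : d / 2 - s + wt ε ≤ wt x := wt_x_lower hs hsd hεα hx
    have hwy : d / 2 - s + wt δ ≤ wt y := wt_x_lower hs hsd hδα hy
    have hBe := cellB ε δ
    have hA := cellA x y
    have hB := cellB x y
    have hmod : d % 2 = 0 := Nat.even_iff.mp hde
    have hwle : wt ε ≤ s := wt_le ε
    have hwle' : wt δ ≤ s := wt_le δ
    have hwxle : wt x ≤ d - s := wt_le x
    have hwyle : wt y ≤ d - s := wt_le y
    omega
  · -- common zero exists: both middle
    have hεω : ε ≠ fun _ => true := by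
      intro h
      apply hc0
      rw [Finset.card_eq_zero, Finset.filter_eq_empty_iff]
      intro j _
      subst h; simp
    have hδω : δ ≠ fun _ => true := by
      intro h
      apply hc0
      rw [Finset.card_eq_zero, Finset.filter_eq_empty_iff]
      intro j _
      subst h; simp
    rcases le_total (tIdx ε) (tIdx δ) with hT | hT
    · exact main_mid hde hs hsd hεα hεω hδα hδω hx hy hT
    · have h1 : ip ε δ = ip δ ε := by
        unfold ip
        congr 1
        apply Finset.filter_congr
        intro j _
        simp [and_comm]
      have h2 : (Finset.univ.filter fun i : Fin (d-s) => x i = y i)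
          = (Finset.univ.filter fun i : Fin (d-s) => y i = x i) := by
        apply Finset.filter_congr
        intro i _
        simp [eq_comm]
      rw [h1, h2]
      exact main_mid hde hs hsd hδα hδω hεα hεω hy hx hT

lemma filter_split {n : ℕ} (P Q : Fin n → Prop) [DecidablePred P] [DecidablePred Q] :
    (Finset.univ.filter fun j => P j).card
      = (Finset.univ.filter fun j => P j ∧ Q j).card
        + (Finset.univ.filter fun j => P j ∧ ¬ Q j).card := by
  simp only [Finset.card_filter]
  rw [← Finset.sum_add_distrib]
  apply Finset.sum_congr rfl
  intro i _
  by_cases hp : P i <;> by_cases hq : Q i <;> simp [hp, hq]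

lemma mid_eq {d s : ℕ} (hs : 0 < s) (hsd : 2*s ≤ d) {ε δ : Fin s → Bool} {x : Fin (d-s) → Bool}
    (hεα : ε ≠ fun _ => false) (hεω : ε ≠ fun _ => true)
    (hδα : δ ≠ fun _ => false) (hδω : δ ≠ fun _ => true)
    (hx : x ∈ Bset d ε) (hy : x ∈ Bset d δ) (hw : wt ε = wt δ)
    (hT : tIdx ε ≤ tIdx δ) : ε = δ := by
  obtain ⟨ht1, ht1v, ht1max⟩ := tIdx_spec hs hεα hεω
  obtain ⟨ht2, ht2v, ht2max⟩ := tIdx_spec hs hδα hδω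
  have hagree : ∀ jn : ℕ, ∀ h2 : jn < s, jn ≤ tIdx ε → ε ⟨jn, h2⟩ = δ ⟨jn, h2⟩ := by
    intro jn h2 hj
    have hj1 : jn < s - 1 := by omega
    have e1 := forced hs hεα hεω hx jn hj hj1 (by omega) h2
    have e2 := forced hs hδα hδω hy jn (le_trans hj hT) hj1 (by omega) h2
    rw [← e1, ← e2]
  by_cases ht12 : tIdx ε = tIdx δ
  · funext j
    by_cases hj : (j:ℕ) ≤ tIdx ε
    · have := hagree (j:ℕ) j.isLt hj
      simpa using this
    · -- j beyond both t's
      have h1 := ht1max j (by omega)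
      have h2 := ht2max j (by omega; )
      rw [h1, h2]
      -- show last entries equal
      have hc := hagree (tIdx ε) (by omega) le_rfl
      have hv1 := ht1v (by omega)
      have hv2 := ht2v (by omega)
      have : (⟨tIdx δ, by omega⟩ : Fin s) = ⟨tIdx ε, by omega⟩ := Fin.ext ht12.symm
      rw [this] at hv2
      revert hc hv1 hv2
      cases (ε ⟨tIdx ε, by omega⟩) <;>
        cases (ε ⟨s-1, Nat.sub_lt hs one_pos⟩) <;>
        cases (δ ⟨s-1, Nat.sub_lt hs one_pos⟩) <;> simp_all
  · exfalso
    have h12 : tIdx ε < tIdx δ := lt_of_le_of_ne hT ht12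
    have hsplitε := filter_split (fun j : Fin s => ε j = true) (fun j => (j:ℕ) ≤ tIdx ε)
    have hsplitδ := filter_split (fun j : Fin s => δ j = true) (fun j => (j:ℕ) ≤ tIdx ε)
    have hfirst : (Finset.univ.filter fun j : Fin s => ε j = true ∧ (j:ℕ) ≤ tIdx ε)
        = Finset.univ.filter fun j : Fin s => δ j = true ∧ (j:ℕ) ≤ tIdx ε := by
      apply Finset.filter_congr
      intro j _
      constructor
      · rintro ⟨h1, h2⟩
        refine ⟨?_, h2⟩
        rw [← hagree (j:ℕ) j.isLt h2]
        simpa using h1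
      · rintro ⟨h1, h2⟩
        refine ⟨?_, h2⟩
        have := hagree (j:ℕ) j.isLt h2
        simp only [Fin.eta] at this
        rw [this]
        exact h1
    have hcards : (Finset.univ.filter fun j : Fin s => ε j = true ∧ ¬(j:ℕ) ≤ tIdx ε).card
        = (Finset.univ.filter fun j : Fin s => δ j = true ∧ ¬(j:ℕ) ≤ tIdx ε).card := by
      have : wt ε = (Finset.univ.filter fun j : Fin s => ε j = true ∧ (j:ℕ) ≤ tIdx ε).card
          + (Finset.univ.filter fun j : Fin s => ε j = true ∧ ¬(j:ℕ) ≤ tIdx ε).card := hsplitε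
      have h2 : wt δ = (Finset.univ.filter fun j : Fin s => δ j = true ∧ (j:ℕ) ≤ tIdx ε).card
          + (Finset.univ.filter fun j : Fin s => δ j = true ∧ ¬(j:ℕ) ≤ tIdx ε).card := hsplitδ
      rw [hfirst] at this
      omega
    cases ha : ε ⟨s - 1, Nat.sub_lt hs one_pos⟩
    · -- tail of ε false: no ones of ε beyond tIdx ε, hence none of δ either
      have hempty : (Finset.univ.filter fun j : Fin s => ε j = true ∧ ¬(j:ℕ) ≤ tIdx ε) = ∅ := by
        rw [Finset.filter_eq_empty_iff]
        rintro j _ ⟨h1, h2⟩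
        have := ht1max j (by omega)
        rw [ha] at this
        rw [this] at h1
        exact Bool.false_ne_true h1
      rw [hempty] at hcards
      have hemptyδ : (Finset.univ.filter fun j : Fin s => δ j = true ∧ ¬(j:ℕ) ≤ tIdx ε) = ∅ :=
        Finset.card_eq_zero.mp hcards.symm
      have hδf : ∀ jn : ℕ, ∀ h2 : jn < s, tIdx ε < jn → δ ⟨jn, h2⟩ = false := by
        intro jn h2 hj
        by_contra hc
        have hmem : (⟨jn, h2⟩ : Fin s) ∈
            (Finset.univ.filter fun j : Fin s => δ j = true ∧ ¬(j:ℕ) ≤ tIdx ε) := by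
          simp only [Finset.mem_filter, Finset.mem_univ, true_and]
          exact ⟨Bool.not_eq_false _ ▸ hc, by simpa using hj⟩
        rw [hemptyδ] at hmem
        exact absurd hmem (Finset.notMem_empty _)
      have hb1 : δ ⟨tIdx δ, by omega⟩ = false := hδf _ (by omega) h12
      have hb2 : δ ⟨s-1, Nat.sub_lt hs one_pos⟩ = false := hδf _ _ (by omega)
      exact ht2v (by omega) (hb1.trans hb2.symm)
    · -- tail of ε true: everything beyond tIdx ε is a one of ε, hence of δ too
      have hfull : (Finset.univ.filter fun j : Fin s => ε j = true ∧ ¬(j:ℕ) ≤ tIdx ε)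
          = (Finset.univ.filter fun j : Fin s => ¬(j:ℕ) ≤ tIdx ε) := by
        apply Finset.filter_congr
        intro j _
        constructor
        · exact fun h => h.2
        · intro h
          refine ⟨?_, h⟩
          have := ht1max j (by omega)
          rw [ha] at this
          exact this
      have hsubδ : (Finset.univ.filter fun j : Fin s => δ j = true ∧ ¬(j:ℕ) ≤ tIdx ε)
          ⊆ (Finset.univ.filter fun j : Fin s => ¬(j:ℕ) ≤ tIdx ε) := by
        intro j hj
        simp only [Finset.mem_coe, Finset.mem_filter, Finset.mem_univ, true_and] at hj ⊢
        exact hj.2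
      have heq : (Finset.univ.filter fun j : Fin s => δ j = true ∧ ¬(j:ℕ) ≤ tIdx ε)
          = (Finset.univ.filter fun j : Fin s => ¬(j:ℕ) ≤ tIdx ε) := by
        apply Finset.eq_of_subset_of_card_le hsubδ
        rw [← hcards, hfull]
      have hδt : ∀ jn : ℕ, ∀ h2 : jn < s, tIdx ε < jn → δ ⟨jn, h2⟩ = true := by
        intro jn h2 hj
        have hmem : (⟨jn, h2⟩ : Fin s) ∈
            (Finset.univ.filter fun j : Fin s => ¬(j:ℕ) ≤ tIdx ε) := by
          simp only [Finset.mem_filter, Finset.mem_univ, true_and]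
          simpa using hj
        rw [← heq] at hmem
        exact (Finset.mem_filter.mp hmem).2.1
      have hb1 : δ ⟨tIdx δ, by omega⟩ = true := hδt _ (by omega) h12
      have hb2 : δ ⟨s-1, Nat.sub_lt hs one_pos⟩ = true := hδt _ _ (by omega)
      exact ht2v (by omega) (hb1.trans hb2.symm)

lemma wt_window {d s : ℕ} (hs : 0 < s) {ε : Fin s → Bool} {x : Fin (d-s) → Bool}
    (hx : x ∈ Bset d ε) :
    (ε = (fun _ => false) ∧ wt x ≤ d/2 - s) ∨ (ε = (fun _ => true) ∧ d/2 ≤ wt x) ∨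
    ((ε ≠ fun _ => false) ∧ (ε ≠ fun _ => true) ∧ wt x = d/2 - s + wt ε) := by
  by_cases hεα : ε = fun _ => false
  · left
    refine ⟨hεα, ?_⟩
    simp only [Bset, if_pos hεα] at hx
    simp only [Xk, if_pos rfl, Set.mem_setOf_eq] at hx
    exact hx
  by_cases hεω : ε = fun _ => true
  · right; left
    refine ⟨hεω, ?_⟩
    simp only [Bset, if_neg hεα, if_pos hεω] at hx
    simp only [Xk, if_neg (by omega : s ≠ 0), eq_self_iff_true, if_true,
      Set.mem_setOf_eq] at hx
    exact hx
  · right; right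
    exact ⟨hεα, hεω, (Bset_mid hεα hεω hx).1⟩

lemma same_x_same_eps {d s : ℕ} (hde : Even d) (hs : 0 < s) (hsd : 2*s ≤ d)
    {ε δ : Fin s → Bool} {x : Fin (d-s) → Bool}
    (hx : x ∈ Bset d ε) (hy : x ∈ Bset d δ) : ε = δ := by
  have hmod : d % 2 = 0 := Nat.even_iff.mp hde
  have hwεs : wt ε ≤ s := wt_le ε
  have hwδs : wt δ ≤ s := wt_le δ
  rcases wt_window hs hx with ⟨he, hb⟩ | ⟨he, hb⟩ | ⟨he1, he2, hb⟩ <;>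
    rcases wt_window hs hy with ⟨he', hb'⟩ | ⟨he', hb'⟩ | ⟨he1', he2', hb'⟩
  · rw [he, he']
  · exfalso; omega
  · exfalso
    have : wt δ ≠ 0 := fun h => he1' (wt_eq_zero h)
    omega
  · exfalso; omega
  · rw [he, he']
  · exfalso
    have : wt δ ≠ s := fun h => he2' (wt_eq_full h)
    omega
  · exfalso
    have : wt ε ≠ 0 := fun h => he1 (wt_eq_zero h)
    omega
  · exfalso
    have : wt ε ≠ s := fun h => he2 (wt_eq_full h)
    omega
  · have hw : wt ε = wt δ := by omega
    rcases le_total (tIdx ε) (tIdx δ) with hT | hT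
    · exact mid_eq hs hsd he1 he2 he1' he2' hx hy hw hT
    · exact (mid_eq hs hsd he1' he2' he1 he2 hy hx hw.symm hT).symm

lemma glue_lt {d s : ℕ} (x : Fin (d-s) → Bool) (w : Fin s → Option Bool)
    (i : Fin d) (h : (i : ℕ) < d - s) : glue x w i = some (x ⟨(i:ℕ), h⟩) := by
  simp only [glue, dif_pos h]

lemma glue_ge {d s : ℕ} (x : Fin (d-s) → Bool) (w : Fin s → Option Bool)
    (i : Fin d) (h : ¬ (i : ℕ) < d - s) (h2 : (i:ℕ) - (d-s) < s) :
    glue x w i = w ⟨(i:ℕ) - (d-s), h2⟩ := by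
  simp only [glue, dif_neg h, dif_pos h2]

/-- Let `d` be a positive even integer and `s` positive with `2s ≤ d`.
The union `⋃_{ε ∈ I^s} C_ε` is a `(d-s)`-neighborly code: any two distinct members `u, v`
satisfy `1 ≤ dist(u,v) ≤ d - s`. -/
theorem Cset_union_neighborly (d s : ℕ) (hd : 0 < d) (hde : Even d) (hs : 0 < s)
    (hsd : 2 * s ≤ d) :
    ∀ u ∈ (⋃ ε : Fin s → Bool, Cset d ε), ∀ v ∈ (⋃ ε : Fin s → Bool, Cset d ε),
      u ≠ v → 1 ≤ jDist u v ∧ jDist u v ≤ d - s := by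
  have hmod : d % 2 = 0 := Nat.even_iff.mp hde
  intro u hu v hv huv
  simp only [Set.mem_iUnion] at hu hv
  obtain ⟨ε, hu⟩ := hu
  obtain ⟨δ, hv⟩ := hv
  obtain ⟨x, hx, w, hw, rfl⟩ := hu
  obtain ⟨y, hy, z, hz, rfl⟩ := hv
  simp only [starSet, Set.mem_setOf_eq] at hw hz
  constructor
  · -- lower bound
    rw [jDist, Nat.one_le_iff_ne_zero, ← Nat.pos_iff_ne_zero, Finset.card_pos]
    by_cases hxy : x = y
    · subst hxy
      have hεδ : ε = δ := same_x_same_eps hde hs hsd hx hy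
      subst hεδ
      have hwz : w ≠ z := fun h => huv (by rw [h])
      obtain ⟨j, hj⟩ := Function.ne_iff.mp hwz
      have hwj := hw j
      have hzj := hz j
      cases hej : ε j
      · rw [hej] at hwj hzj
        simp only [Bool.false_eq_true, if_false] at hwj hzj
        exact absurd (hwj.trans hzj.symm) hj
      · rw [hej, if_pos rfl] at hwj hzj
        obtain ⟨b1, hb1⟩ := hwj
        obtain ⟨b2, hb2⟩ := hzj
        have hb12 : b1 ≠ b2 := by
          intro h; apply hj; rw [hb1, hb2, h]
        refine ⟨⟨(d-s) + (j:ℕ), by omega⟩, ?_⟩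
        simp only [Finset.mem_filter, Finset.mem_univ, true_and]
        refine ⟨b1, b2, ?_, ?_, hb12⟩
        · rw [glue_ge x w _ (by simp) (by simp)]
          have : (⟨(d-s) + (j:ℕ) - (d-s), by omega⟩ : Fin s) = j := Fin.ext (by simp)
          rw [this]
          exact hb1
        · rw [glue_ge x z _ (by simp) (by simp)]
          have : (⟨(d-s) + (j:ℕ) - (d-s), by omega⟩ : Fin s) = j := Fin.ext (by simp)
          rw [this]
          exact hb2
    · obtain ⟨i, hi⟩ := Function.ne_iff.mp hxy
      refine ⟨⟨(i:ℕ), by omega⟩, ?_⟩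
      simp only [Finset.mem_filter, Finset.mem_univ, true_and]
      refine ⟨x i, y i, ?_, ?_, by simpa using hi⟩
      · rw [glue_lt x w _ (by simpa using i.isLt)]
      · rw [glue_lt y z _ (by simpa using i.isLt)]
  · -- upper bound
    classical
    set P : Fin d → Prop :=
      fun i => ∃ a b : Bool, glue x w i = some a ∧ glue y z i = some b ∧ a ≠ b with hP
    have hjd : jDist (glue x w) (glue y z) = (Finset.univ.filter P).card := by
      rw [jDist]
    have key := Finset.card_filter_add_card_filter_not
      (s := (Finset.univ : Finset (Fin d))) (p := P)
    set Agr : Finset (Fin d) :=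
      Finset.univ.filter (fun i => ∃ a : Bool, glue x w i = some a ∧ glue y z i = some a)
      with hAgr
    set Jok : Finset (Fin d) :=
      Finset.univ.filter (fun i => glue x w i = none ∨ glue y z i = none) with hJok
    have hdisj : Disjoint Agr Jok := by
      rw [Finset.disjoint_left]
      intro i h1 h2
      simp only [hAgr, hJok, Finset.mem_filter, Finset.mem_univ, true_and] at h1 h2
      obtain ⟨a, ha1, ha2⟩ := h1
      rcases h2 with h | h
      · rw [h] at ha1; exact Option.some_ne_none _ ha1.symm
      · rw [h] at ha2; exact Option.some_ne_none _ ha2.symm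
    have hsub : Agr ∪ Jok ⊆ Finset.univ.filter (fun i => ¬ P i) := by
      intro i hi
      simp only [Finset.mem_union, hAgr, hJok, Finset.mem_filter, Finset.mem_univ,
        true_and] at hi ⊢
      rintro ⟨a', b', hu', hv', hab⟩
      rcases hi with ⟨a, ha1, ha2⟩ | h | h
      · rw [hu'] at ha1
        rw [hv'] at ha2
        exact hab ((Option.some_inj.mp ha1).trans (Option.some_inj.mp ha2).symm)
      · rw [h] at hu'; exact Option.some_ne_none _ hu'.symm
      · rw [h] at hv'; exact Option.some_ne_none _ hv'.symm
    have hAgr_ge : ip ε δ ≤ Agr.card := by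
      refine le_trans (main_agree hde hs hsd hx hy) ?_
      apply Finset.card_le_card_of_injOn (fun i => ⟨(i:ℕ), by omega⟩)
      · intro i hi
        simp only [Finset.mem_coe, Finset.mem_filter, Finset.mem_univ, true_and] at hi
        simp only [hAgr, Finset.mem_coe, Finset.mem_filter, Finset.mem_univ, true_and]
        refine ⟨x i, ?_, ?_⟩
        · rw [glue_lt x w _ (by simpa using i.isLt)]
        · rw [glue_lt y z _ (by simpa using i.isLt), ← hi]
      · intro i _ i' _ he
        simp only [Fin.mk.injEq] at he
        exact Fin.ext he
    have hcnt : ip ε δ + (Finset.univ.filter fun j : Fin s => ¬(ε j = true ∧ δ j = true)).card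
        = s := by
      have := Finset.card_filter_add_card_filter_not
        (s := (Finset.univ : Finset (Fin s))) (p := fun j => ε j = true ∧ δ j = true)
      simpa [ip] using this
    have hJok_ge : (Finset.univ.filter fun j : Fin s => ¬(ε j = true ∧ δ j = true)).card
        ≤ Jok.card := by
      apply Finset.card_le_card_of_injOn (fun j => ⟨(d-s) + (j:ℕ), by omega⟩)
      · intro j hj
        simp only [Finset.mem_coe, Finset.mem_filter, Finset.mem_univ, true_and] at hj
        simp only [hJok, Finset.mem_coe, Finset.mem_filter, Finset.mem_univ, true_and]
        have hidx : (⟨(d-s) + (j:ℕ) - (d-s), by omega⟩ : Fin s) = j := Fin.ext (by simp)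
        cases hej : ε j
        · left
          rw [glue_ge x w _ (by simp) (by simp), hidx]
          have := hw j
          rw [hej] at this
          simpa using this
        · right
          have hδj : δ j = false := by
            cases hδj : δ j
            · rfl
            · exact absurd ⟨hej, hδj⟩ hj
          rw [glue_ge y z _ (by simp) (by simp), hidx]
          have := hz j
          rw [hδj] at this
          simpa using this
      · intro j _ j' _ he
        simp only [Fin.mk.injEq] at he
        exact Fin.ext (by omega)
    have hUnion : Agr.card + Jok.card ≤ (Finset.univ.filter fun i => ¬ P i).card := by
      rw [← Finset.card_union_of_disjoint hdisj]
      exact Finset.card_le_card hsub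
    have hcardd : (Finset.univ : Finset (Fin d)).card = d := by simp
    rw [hjd]
    omega
end

section
/- Let d be even and s a positive integer with 2s ≤ d, and let γ ∈ I^s \ {α, ω}. Then for every x ∈ B_α and y ∈ B_{γ̄} (where γ̄ is the antipode of γ), the Hamming distance satisfies dist(x,y) ≤ d - s - |γ|. -/
lemma wt_le_card {n : ℕ} (x : Fin n → Bool) : wt x ≤ n := by
  simpa [wt] using Finset.card_filter_le Finset.univ (fun i => x i = true)

lemma wt_antipode' {n : ℕ} (x : Fin n → Bool) : wt (antipode x) = n - wt x := by
  have h := Finset.card_filter_add_card_filter_not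
    (s := (Finset.univ : Finset (Fin n))) (p := fun i => x i = true)
  have h2 : wt (antipode x) = (Finset.univ.filter fun i => ¬ (x i = true)).card := by
    unfold wt antipode
    congr 1
    apply Finset.filter_congr
    intro i _
    simp
  simp only [Finset.card_univ, Fintype.card_fin] at h
  have := wt_le_card x
  unfold wt at *
  omega

lemma hammingDist_le_wt_add_wt {n : ℕ} (x y : Fin n → Bool) :
    hammingDist x y ≤ wt x + wt y := by
  have hsub : (Finset.univ.filter fun i => x i ≠ y i) ⊆
      (Finset.univ.filter fun i => x i = true) ∪ (Finset.univ.filter fun i => y i = true) := by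
    intro i hi
    simp only [Finset.mem_filter, Finset.mem_union, Finset.mem_univ, true_and] at *
    cases hx : x i <;> cases hy : y i <;> simp_all
  calc hammingDist x y ≤ ((Finset.univ.filter fun i => x i = true) ∪
        (Finset.univ.filter fun i => y i = true)).card := Finset.card_le_card hsub
    _ ≤ wt x + wt y := Finset.card_union_le _ _

/-- Let `d` be even, `s` positive with `2s ≤ d`, and `γ ∈ I^s ∖ {α, ω}`.
For every `x ∈ B_α` and `y ∈ B_{γ̄}`, the Hamming distance satisfies
`dist(x,y) ≤ d - s - |γ|`. -/
theorem dist_Balpha_Bgammabar (d s : ℕ) (hde : Even d) (hs : 0 < s) (hsd : 2 * s ≤ d)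
    (γ : Fin s → Bool) (hγα : γ ≠ fun _ => false) (hγω : γ ≠ fun _ => true) :
    ∀ x ∈ Bset d (fun _ => false), ∀ y ∈ Bset d (antipode γ),
      hammingDist x y ≤ d - s - wt γ := by
  intro x hx y hy
  -- basic facts about wt γ
  have hwγs : wt γ ≤ s := wt_le_card γ
  have hwγpos : 0 < wt γ := by
    have h : ¬ ∀ i, γ i = false := fun h => hγα (funext h)
    push_neg at h
    obtain ⟨i, hi⟩ := h
    exact Finset.card_pos.mpr ⟨i, by simpa using hi⟩
  have hwγlt : wt γ < s := by
    rcases lt_or_eq_of_le hwγs with h | h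
    · exact h
    · exfalso
      apply hγω
      have : (Finset.univ.filter fun i => γ i = true) = Finset.univ := by
        apply Finset.eq_univ_of_card
        simpa [wt] using h
      funext i
      have := Finset.eq_univ_iff_forall.mp this i
      simpa using this
  -- antipode γ is neither all-false nor all-true
  have hαγ : antipode γ ≠ fun _ => false := by
    intro h
    apply hγω
    funext i
    have := congrFun h i
    simp [antipode] at this
    simp [this]
  have hωγ : antipode γ ≠ fun _ => true := by
    intro h
    apply hγα
    funext i
    have := congrFun h i
    simp [antipode] at this
    simp [this]
  have hwa : wt (antipode γ) = s - wt γ := wt_antipode' γ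
  -- extract weight info
  simp only [Bset, if_pos rfl] at hx
  simp only [Xk, if_pos rfl] at hx
  rw [Bset, if_neg hαγ, if_neg hωγ] at hy
  obtain ⟨hy1, _⟩ := hy
  rw [Xk, if_neg (by omega), if_neg (by omega)] at hy1
  have hxw : wt x ≤ d / 2 - s := hx
  have hyw : wt y = d / 2 - s + (s - wt γ) := by rw [← hwa]; exact hy1
  obtain ⟨r, hr⟩ := hde
  have := hammingDist_le_wt_add_wt x y
  omega
end
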